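/- If c ∈ ℂ satisfies Re(c) > 0 and Im(c) ≠ 0, then every eigenvalue λ_n := c^{1/2}(2n+1) of H_c (n = 0, 1, 2, …) lies in the topological interior of the set W := {t₁ + c·t₂ ∈ ℂ : t₁, t₂ ≥ 0, t₁·t₂ ≥ 1/4}, i.e. the spectrum of H_c is contained in the interior of its numerical range. -/

import Mathlib

open Complex

/-- If `Re c > 0` and `Im c ≠ 0`, every eigenvalue `λ_n = c^{1/2}(2n+1)` of the complex
harmonic oscillator lies in the interior of its numerical range
`W = {t₁ + c t₂ : t₁, t₂ ≥ 0, t₁ t₂ ≥ 1/4}`. -/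
theorem eigenvalue_mem_interior_numericalRange (c : ℂ) (hre : 0 < c.re)
    (him : c.im ≠ 0) (n : ℕ) :
    c ^ ((1 : ℂ) / 2) * (2 * (n : ℂ) + 1) ∈
      interior {z : ℂ | ∃ t₁ t₂ : ℝ, 0 ≤ t₁ ∧ 0 ≤ t₂ ∧ 1 / 4 ≤ t₁ * t₂ ∧
        z = (t₁ : ℂ) + c * (t₂ : ℂ)} := by
  have hc0 : c ≠ 0 := by
    intro h; rw [h] at hre; simp at hre
  set s : ℂ := c ^ ((1 : ℂ) / 2) with hs
  have hsq : s ^ 2 = c := by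
    rw [hs, show (1 : ℂ)/2 = ((2 : ℕ) : ℂ)⁻¹ by norm_num]
    exact Complex.cpow_nat_inv_pow c two_ne_zero
  -- real part of s is positive
  have harg : |c.arg| < Real.pi / 2 := Complex.abs_arg_lt_pi_div_two_iff.2 (Or.inl hre)
  have ha : 0 < s.re := by
    rw [hs, Complex.cpow_def_of_ne_zero hc0, Complex.exp_re]
    apply mul_pos (Real.exp_pos _)
    apply Real.cos_pos_of_mem_Ioo
    have : (Complex.log c * (1/2)).im = c.arg / 2 := by
      simp [Complex.mul_im, Complex.log_im, Complex.log_re]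
      ring
    rw [this]
    constructor
    · nlinarith [abs_lt.1 harg, Real.pi_pos]
    · nlinarith [abs_lt.1 harg, Real.pi_pos]
  have hcre : c.re = s.re ^ 2 - s.im ^ 2 := by
    rw [← hsq]; simp [pow_two, Complex.mul_re]
  have hcim : c.im = 2 * s.re * s.im := by
    rw [← hsq]; simp [pow_two, Complex.mul_im]; ring
  have hb : s.im ≠ 0 := by
    intro h; rw [hcim, h] at him; simp at him
  set a := s.re
  set b := s.im
  -- the open set
  set V : Set ℂ := {z | 0 < z.re - c.re * z.im / c.im ∧ 0 < z.im / c.im ∧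
      1/4 < (z.re - c.re * z.im / c.im) * (z.im / c.im)} with hV
  have hVopen : IsOpen V := by
    have h1 : Continuous fun z : ℂ => z.re - c.re * z.im / c.im := by fun_prop
    have h2 : Continuous fun z : ℂ => z.im / c.im := by fun_prop
    exact (isOpen_lt continuous_const h1).inter
      ((isOpen_lt continuous_const h2).inter
        (isOpen_lt continuous_const (h1.mul h2)))
  have hVsub : V ⊆ {z : ℂ | ∃ t₁ t₂ : ℝ, 0 ≤ t₁ ∧ 0 ≤ t₂ ∧ 1 / 4 ≤ t₁ * t₂ ∧
        z = (t₁ : ℂ) + c * (t₂ : ℂ)} := by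
    rintro z ⟨h1, h2, h3⟩
    refine ⟨z.re - c.re * z.im / c.im, z.im / c.im, le_of_lt h1, le_of_lt h2, le_of_lt h3, ?_⟩
    apply Complex.ext <;> simp [Complex.add_re, Complex.mul_re, Complex.add_im, Complex.mul_im]
    · field_simp; ring
    · field_simp
  have hmem : s * (2 * (n : ℂ) + 1) ∈ V := by
    set m : ℝ := 2 * (n : ℝ) + 1 with hm
    have hm1 : 1 ≤ m := by have h0 : (0:ℝ) ≤ (n:ℝ) := Nat.cast_nonneg n; rw [hm]; linarith
    have hre' : (s * (2 * (n : ℂ) + 1)).re = m * a := by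
      simp [Complex.mul_re, hm]; ring
    have him' : (s * (2 * (n : ℂ) + 1)).im = m * b := by
      simp [Complex.mul_im, hm]; ring
    have hb2 : 0 < b ^ 2 := by positivity
    have key1 : (s * (2 * (n : ℂ) + 1)).im / c.im = m / (2 * a) := by
      rw [him', hcim]; field_simp
    have key2 : (s * (2 * (n : ℂ) + 1)).re - c.re * (s * (2 * (n : ℂ) + 1)).im / c.im
        = m * (a ^ 2 + b ^ 2) / (2 * a) := by
      rw [hre', him', hcre, hcim]; field_simp; ring
    refine ⟨?_, ?_, ?_⟩
    · show (0:ℝ) < _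
      rw [key2]; positivity
    · show (0:ℝ) < _
      rw [key1]; positivity
    · show (1:ℝ)/4 < _
      rw [key1, key2, div_mul_div_comm, lt_div_iff₀ (by positivity)]
      have hmm : 1 ≤ m * m := by nlinarith
      have hab : (0:ℝ) < a ^ 2 + b ^ 2 := by positivity
      have h : a ^ 2 + b ^ 2 ≤ m * (a ^ 2 + b ^ 2) * m := by nlinarith
      calc (1:ℝ)/4 * (2 * a * (2 * a)) = a ^ 2 := by ring
        _ < a ^ 2 + b ^ 2 := by linarith
        _ ≤ m * (a ^ 2 + b ^ 2) * m := h
  exact interior_maximal hVsub hVopen hmem
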